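/- Let R be a commutative ring satisfying the descending chain condition on annihilator ideals. Then the set Ass R of associated primes of R is finite. -/

import Mathlib

open Submodule

section Aux

variable {R : Type*} [CommRing R]

/-- Double annihilator identity for an ideal that is itself an annihilator of a cyclic
submodule. -/
lemma ann_ann_eq {x : R} {q : Ideal R} (hq : q = (R ∙ x).annihilator) :
    (Submodule.annihilator (M := R) q).annihilator = q := by
  apply le_antisymm
  · intro r hr
    have hx : x ∈ (Submodule.annihilator (M := R) q) := by
      rw [Submodule.mem_annihilator]
      intro n hn
      rw [hq, Submodule.mem_annihilator_span_singleton] at hn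
      rw [smul_eq_mul, mul_comm, ← smul_eq_mul, hn]
    rw [hq, Submodule.mem_annihilator_span_singleton]
    exact Submodule.mem_annihilator.mp hr x hx
  · intro r hr
    rw [Submodule.mem_annihilator]
    intro n hn
    have := Submodule.mem_annihilator.mp hn r hr
    rw [smul_eq_mul, mul_comm, ← smul_eq_mul] at this
    exact this

lemma max_ann
    (hdcc : ∀ f : ℕ → Ideal R, (∀ n, f (n + 1) ≤ f n) →
      (∀ n, ∃ S : Set R, f n = (Submodule.span R S).annihilator) →
      ∃ n, ∀ m, n ≤ m → f m = f n)
    (Z : Set R) (hZ : Z.Nonempty) :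
    ∃ z ∈ Z, ∀ z' ∈ Z, (R ∙ z).annihilator ≤ (R ∙ z').annihilator →
      (R ∙ z').annihilator = (R ∙ z).annihilator := by
  by_contra h
  push_neg at h
  have h' : ∀ z : Z, ∃ z' : Z, (R ∙ (z : R)).annihilator < (R ∙ (z' : R)).annihilator := by
    intro z
    obtain ⟨z', hz', hle, hne⟩ := h z z.2
    exact ⟨⟨z', hz'⟩, lt_of_le_of_ne hle (Ne.symm hne)⟩
  choose g hg using h'
  obtain ⟨z0, hz0⟩ := hZ
  let s : ℕ → Z := fun n => g^[n] ⟨z0, hz0⟩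
  have hs : ∀ n, (R ∙ ((s n : Z) : R)).annihilator < (R ∙ ((s (n + 1) : Z) : R)).annihilator := by
    intro n
    have : s (n + 1) = g (s n) := Function.iterate_succ_apply' g n _
    rw [this]
    exact hg _
  set f : ℕ → Ideal R :=
    fun k => Submodule.annihilator (M := R) (R ∙ ((s k : Z) : R)).annihilator with hfdef
  have hdesc : ∀ k, f (k + 1) ≤ f k := fun k => Submodule.annihilator_mono (le_of_lt (hs k))
  have hann : ∀ k, ∃ S : Set R, f k = (Submodule.span R S).annihilator := fun k =>
    ⟨((R ∙ ((s k : Z) : R)).annihilator : Set R), by rw [Submodule.span_eq]⟩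
  obtain ⟨n, hn⟩ := hdcc f hdesc hann
  have heq : f (n + 1) = f n := hn (n + 1) (Nat.le_succ n)
  have e1 := ann_ann_eq (R := R) (x := ((s (n + 1) : Z) : R)) rfl
  have e2 := ann_ann_eq (R := R) (x := ((s n : Z) : R)) rfl
  have : (R ∙ ((s (n + 1) : Z) : R)).annihilator = (R ∙ ((s n : Z) : R)).annihilator := by
    calc (R ∙ ((s (n + 1) : Z) : R)).annihilator
          = (Submodule.annihilator (M := R) (R ∙ ((s (n + 1) : Z) : R)).annihilator).annihilator :=
            e1.symm
      _ = (Submodule.annihilator (M := R) (R ∙ ((s n : Z) : R)).annihilator).annihilator :=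
            congrArg (Submodule.annihilator (M := R)) heq
      _ = (R ∙ ((s n : Z) : R)).annihilator := e2
  exact (hs n).ne this.symm

lemma assoc_eq_ann
    (hdcc : ∀ f : ℕ → Ideal R, (∀ n, f (n + 1) ≤ f n) →
      (∀ n, ∃ S : Set R, f n = (Submodule.span R S).annihilator) →
      ∃ n, ∀ m, n ≤ m → f m = f n)
    {p : Ideal R} (hp : p ∈ associatedPrimes R R) : ∃ z : R, p = (R ∙ z).annihilator := by
  have hp' : (⊥ : Submodule R R).IsAssociatedPrime p := hp
  obtain ⟨hprime, x, hx⟩ := hp'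
  have memp : ∀ r, r ∈ p ↔ ∃ k : ℕ, r ^ k * x = 0 := by
    intro r
    rw [hx, Ideal.mem_radical_iff]
    simp only [Submodule.mem_colon_singleton, Submodule.mem_bot, smul_eq_mul]
  have hmemA : ∀ r g : R, r ∈ (R ∙ g).annihilator ↔ r * g = 0 := by
    intro r g
    rw [Submodule.mem_annihilator_span_singleton, smul_eq_mul]
  have h1 : (1 : R) ∉ p := fun h => hprime.ne_top ((Ideal.eq_top_iff_one p).mpr h)
  obtain ⟨y, ⟨r, hr, rfl⟩, hymax⟩ :=
    max_ann hdcc {y | ∃ r ∉ p, y = r * x} ⟨x, 1, h1, (one_mul x).symm⟩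
  have P : ∀ a b : R, a * b * (r * x) = 0 → b ∉ p → a * (r * x) = 0 := by
    intro a b hab hb
    have hle : (R ∙ (r * x)).annihilator ≤ (R ∙ (b * r * x)).annihilator := by
      intro t ht
      rw [hmemA] at ht ⊢
      calc t * (b * r * x) = b * (t * (r * x)) := by ring
        _ = 0 := by rw [ht, mul_zero]
    have hbr : b * r ∉ p := fun h => (hprime.mem_or_mem h).elim hb hr
    have heq := hymax (b * r * x) ⟨b * r, hbr, rfl⟩ hle
    have : a ∈ (R ∙ (b * r * x)).annihilator := by
      rw [hmemA]
      calc a * (b * r * x) = a * b * (r * x) := by ring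
        _ = 0 := hab
    rw [heq, hmemA] at this
    exact this
  have Q : ∀ t s : R, s * (r * x) ≠ 0 → t * (s * (r * x)) = 0 → t ∈ p := by
    intro t s hs hts
    by_contra ht
    exact hs (P s t (by
      calc s * t * (r * x) = t * (s * (r * x)) := by ring
        _ = 0 := hts) ht)
  have hy0 : (1 : R) * (r * x) ≠ 0 := by
    rw [one_mul]
    intro h
    exact hr ((memp r).mpr ⟨1, by rw [pow_one]; exact h⟩)
  obtain ⟨z, ⟨s, hs, rfl⟩, hzmax⟩ :=
    max_ann hdcc {z | ∃ s, s * (r * x) ≠ 0 ∧ z = s * (r * x)} ⟨_, 1, hy0, rfl⟩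
  refine ⟨s * (r * x), le_antisymm ?_ ?_⟩
  · intro a ha
    obtain ⟨k, hk⟩ := (memp a).mp ha
    rw [hmemA]
    have key : ∀ j : ℕ, a ^ j * (s * (r * x)) = 0 → a * (s * (r * x)) = 0 := by
      intro j
      induction j with
      | zero =>
        intro h
        rw [pow_zero, one_mul] at h
        rw [h, mul_zero]
      | succ j ih =>
        intro h
        by_cases hj : a ^ j * (s * (r * x)) = 0
        · exact ih hj
        · have hw : a ^ j * (s * (r * x)) = (a ^ j * s) * (r * x) := by ring
          have hle : (R ∙ (s * (r * x))).annihilator ≤ (R ∙ (a ^ j * s * (r * x))).annihilator := by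
            intro t ht
            rw [hmemA] at ht ⊢
            calc t * (a ^ j * s * (r * x)) = a ^ j * (t * (s * (r * x))) := by ring
              _ = 0 := by rw [ht, mul_zero]
          have heq := hzmax (a ^ j * s * (r * x)) ⟨a ^ j * s, by rw [← hw]; exact hj, rfl⟩ hle
          have : a ∈ (R ∙ (a ^ j * s * (r * x))).annihilator := by
            rw [hmemA]
            calc a * (a ^ j * s * (r * x)) = a ^ (j + 1) * (s * (r * x)) := by ring
              _ = 0 := h
          rw [heq, hmemA] at this
          exact this
    apply key k
    calc a ^ k * (s * (r * x)) = s * r * (a ^ k * x) := by ring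
      _ = 0 := by rw [hk, mul_zero]
  · intro t ht
    rw [hmemA] at ht
    exact Q t s hs ht

/-- Step lemma: if `T` is an infinite set of associated primes, then (assuming DCC on
annihilator ideals) some `p ∈ T` is strictly below infinitely many elements of `T`. -/
lemma step_lemma
    (hdcc : ∀ f : ℕ → Ideal R, (∀ n, f (n + 1) ≤ f n) →
      (∀ n, ∃ S : Set R, f n = (Submodule.span R S).annihilator) →
      ∃ n, ∀ m, n ≤ m → f m = f n)
    {T : Set (Ideal R)} (hT : T ⊆ associatedPrimes R R) (hinf : T.Infinite) :
    ∃ p ∈ T, {q | q ∈ T ∧ p < q}.Infinite := by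
  classical
  set e := hinf.natEmbedding with he
  set p : ℕ → Ideal R := fun i => (e i : Ideal R) with hp
  have hpT : ∀ i, p i ∈ T := fun i => (e i).2
  have hpinj : Function.Injective p := fun i j h => e.injective (Subtype.ext h)
  have hass : ∀ i, IsAssociatedPrime (p i) R := fun i => hT (hpT i)
  choose x hx using fun i => assoc_eq_ann hdcc (hT (hpT i))
  set f : ℕ → Ideal R :=
    fun n => (Submodule.span R (x '' {i | i ≤ n})).annihilator with hf
  have hdesc : ∀ n, f (n + 1) ≤ f n := by
    intro n
    exact Submodule.annihilator_mono (Submodule.span_mono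
      (Set.image_mono fun i (hi : i ≤ n) => hi.trans (Nat.le_succ n)))
  obtain ⟨n, hn⟩ := hdcc f hdesc (fun n => ⟨x '' {i | i ≤ n}, rfl⟩)
  -- inf of the primes is below f n
  have hinf_le : (Finset.range (n + 1)).inf p ≤ f n := by
    intro r hr
    rw [Submodule.mem_annihilator_span]
    rintro ⟨y, i, hi, rfl⟩
    have : r ∈ p i := Finset.inf_le (f := p) (Finset.mem_range.mpr (Nat.lt_succ_of_le hi)) hr
    rw [hx i, Submodule.mem_annihilator_span_singleton] at this
    exact this
  have key : ∀ m, n ≤ m → ∃ i, i ≤ n ∧ p i ≤ p m := by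
    intro m hm
    have h1 : f m ≤ p m := by
      rw [hx m]
      apply Submodule.annihilator_mono
      rw [Submodule.span_le]
      rintro y (rfl : y = x m)
      exact Submodule.subset_span ⟨m, le_refl m, rfl⟩
    have h2 : (Finset.range (n + 1)).inf p ≤ p m := by
      calc (Finset.range (n + 1)).inf p ≤ f n := hinf_le
        _ = f m := (hn m hm).symm
        _ ≤ p m := h1
    obtain ⟨i, hi, hle⟩ := (Ideal.IsPrime.inf_le' (hass m).1).mp h2
    exact ⟨i, Nat.lt_succ_iff.mp (Finset.mem_range.mp hi), hle⟩
  -- pigeonhole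
  have : ∃ i, i ≤ n ∧ {m | n ≤ m ∧ p i ≤ p m}.Infinite := by
    by_contra hcon
    push_neg at hcon
    have hfin : (⋃ i ∈ Finset.range (n + 1), {m | n ≤ m ∧ p i ≤ p m}).Finite := by
      apply Set.Finite.biUnion (Finset.range (n + 1)).finite_toSet
      intro i hi
      have := hcon i (Nat.lt_succ_iff.mp (Finset.mem_range.mp hi))
      exact this
    have hsub : {m | n ≤ m} ⊆ ⋃ i ∈ Finset.range (n + 1), {m | n ≤ m ∧ p i ≤ p m} := by
      intro m hm
      obtain ⟨i, hi, hle⟩ := key m hm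
      exact Set.mem_biUnion (Finset.mem_range.mpr (Nat.lt_succ_of_le hi)) ⟨hm, hle⟩
    exact absurd (hfin.subset hsub) (Set.infinite_of_not_bddAbove (by
      intro ⟨b, hb⟩
      exact absurd (hb (Set.mem_setOf.mpr (le_max_left n (b+1)))) (by simp)))
  obtain ⟨i, _, hi_inf⟩ := this
  refine ⟨p i, hpT i, ?_⟩
  have himg : p '' ({m | n ≤ m ∧ p i ≤ p m} \ {i}) ⊆ {q | q ∈ T ∧ p i < q} := by
    rintro q ⟨m, ⟨⟨_, hle⟩, hne⟩, rfl⟩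
    refine ⟨hpT m, lt_of_le_of_ne hle ?_⟩
    intro h
    exact hne (hpinj h.symm ▸ rfl)
  have : (({m | n ≤ m ∧ p i ≤ p m} \ {i}) : Set ℕ).Infinite :=
    (hi_inf.diff (Set.finite_singleton i))
  exact (this.image (Set.injOn_of_injective hpinj)).mono himg

end Aux

/-- If a commutative ring `R` satisfies DCC on annihilator ideals (annihilators of
subsets of `R`), then the set of associated primes of `R` is finite. -/
theorem stmt1 {R : Type*} [CommRing R]
    (hdcc : ∀ f : ℕ → Ideal R, (∀ n, f (n + 1) ≤ f n) →
      (∀ n, ∃ S : Set R, f n = (Submodule.span R S).annihilator) →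
      ∃ n, ∀ m, n ≤ m → f m = f n) :
    (associatedPrimes R R).Finite := by
  classical
  by_contra hfin
  have hinf : (associatedPrimes R R).Infinite := hfin
  -- build a strictly increasing sequence of associated primes
  let A := {T : Set (Ideal R) // T ⊆ associatedPrimes R R ∧ T.Infinite}
  have stepA : ∀ T : A, ∃ p : Ideal R, p ∈ T.1 ∧ {q | q ∈ T.1 ∧ p < q}.Infinite :=
    fun T => by
      obtain ⟨p, hp1, hp2⟩ := step_lemma hdcc T.2.1 T.2.2
      exact ⟨p, hp1, hp2⟩
  choose pr hpr1 hpr2 using stepA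
  let next : A → A := fun T =>
    ⟨{q | q ∈ T.1 ∧ pr T < q}, fun q hq => T.2.1 hq.1, hpr2 T⟩
  let seq : ℕ → A := fun n => Nat.rec ⟨associatedPrimes R R, le_refl _, hinf⟩
    (fun _ T => next T) n
  set q : ℕ → Ideal R := fun k => pr (seq k) with hq
  have hmem : ∀ k, q k ∈ associatedPrimes R R := fun k => (seq k).2.1 (hpr1 (seq k))
  have hlt : ∀ k, q k < q (k + 1) := by
    intro k
    have : q (k + 1) ∈ (seq (k + 1)).1 := hpr1 (seq (k + 1))
    have h2 : (seq (k + 1)).1 = {s | s ∈ (seq k).1 ∧ q k < s} := rfl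
    rw [h2] at this
    exact this.2
  -- descending chain of annihilators
  set f : ℕ → Ideal R := fun k => Submodule.annihilator (M := R) (q k) with hfdef
  have hdesc : ∀ k, f (k + 1) ≤ f k := fun k =>
    Submodule.annihilator_mono (le_of_lt (hlt k))
  have hann : ∀ k, ∃ S : Set R, f k = (Submodule.span R S).annihilator := by
    intro k
    exact ⟨(q k : Set R), by rw [Submodule.span_eq]⟩
  obtain ⟨n, hn⟩ := hdcc f hdesc hann
  have heq : f (n + 1) = f n := hn (n + 1) (Nat.le_succ n)
  obtain ⟨x1, hx1⟩ := assoc_eq_ann hdcc (hmem (n + 1))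
  obtain ⟨x0, hx0⟩ := assoc_eq_ann hdcc (hmem n)
  have : q (n + 1) = q n := by
    have e1 := ann_ann_eq hx1
    have e2 := ann_ann_eq hx0
    calc q (n + 1) = (Submodule.annihilator (M := R) (q (n+1))).annihilator := e1.symm
      _ = (Submodule.annihilator (M := R) (q n)).annihilator := congrArg (Submodule.annihilator (M := R)) heq
      _ = q n := e2
  exact absurd this (ne_of_gt (hlt n))
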